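/- Let n ≥ 2 and i a proper subset of {1,…,n}. For a sequence s : (-ℕ)ⁿ → R, the associated sequence s^{(i,*)} over the power series ring in the complementary variables satisfies: ⋂_{a' ∈ (-ℕ)^{i'}} Ann(s^{(a')}) = Ann(s) ∩ R[X_i] = Ann(s^{(i,*)}), where s^{(a')} denotes the a'-section of s. -/

import Mathlib

noncomputable section

variable {R : Type*}

/-- Right-shift action of a (multivariate) polynomial on a sequence indexed by `(-ℕ)^n`;
the index `a : σ → ℕ` encodes the point `-a`, so `(f ∘ s)_{-b} = ∑ f_a s_{-b-a}`. -/
def shiftA [CommSemiring R] {σ : Type*} (f : MvPolynomial σ R) (s : (σ → ℕ) → R) :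
    (σ → ℕ) → R :=
  fun b => ∑ a ∈ f.support, f.coeff a * s (fun j => b j + a j)

/-- The generating function `Γ(s) = ∑_{c ≤ 0} s_c X^c`, as a coefficient function on `ℤ^n`. -/
def GammaZ [Zero R] {n : ℕ} (s : (Fin n → ℕ) → R) : (Fin n → ℤ) → R :=
  fun c => if ∀ i, c i ≤ 0 then s (fun i => (-(c i)).toNat) else 0

/-- Coefficient function of the product `f · G` in the Laurent series ring
`R((X₁⁻¹, …, Xₙ⁻¹))`. -/
def polyMulG [CommSemiring R] {n : ℕ} (f : MvPolynomial (Fin n) R) (G : (Fin n → ℤ) → R) :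
    (Fin n → ℤ) → R :=
  fun c => ∑ a ∈ f.support, f.coeff a * G (fun i => c i - (a i : ℤ))

/-- Vector of partial degrees `δᵢ f`. -/
def degV [CommSemiring R] {n : ℕ} (f : MvPolynomial (Fin n) R) : Fin n → ℕ :=
  fun i => f.support.sup fun a => a i

/-- `degV` as a finitely supported function. -/
def degE [CommSemiring R] {n : ℕ} (f : MvPolynomial (Fin n) R) : Fin n →₀ ℕ :=
  Finsupp.equivFunOnFinite.symm (degV f)

/-- Embedding of `R[Xᵢ]` into `R[X₁,…,Xₙ]`. -/
def embedP [CommSemiring R] {n : ℕ} (i : Fin n) (p : Polynomial R) : MvPolynomial (Fin n) R :=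
  Polynomial.eval₂ MvPolynomial.C (MvPolynomial.X i) p

def toExp {n : ℕ} (c : Fin n → ℤ) : Fin n →₀ ℕ :=
  Finsupp.equivFunOnFinite.symm fun i => (c i).toNat

/-- The coefficient function on `ℤ^n` of a polynomial. -/
def toCoeffZ [CommSemiring R] {n : ℕ} (g : MvPolynomial (Fin n) R) : (Fin n → ℤ) → R :=
  fun c => if ∀ i, 0 ≤ c i then g.coeff (toExp c) else 0

def oneExp {n : ℕ} : Fin n →₀ ℕ := Finsupp.equivFunOnFinite.symm 1

/-- The border polynomial `β₀(f,s) = (f·Γ(s)) | [1, deg f]`. -/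
def mvBeta0 [CommRing R] {n : ℕ} (f : MvPolynomial (Fin n) R) (s : (Fin n → ℕ) → R) :
    MvPolynomial (Fin n) R :=
  ∑ c ∈ Finset.Icc oneExp (degE f),
    MvPolynomial.monomial c (polyMulG f (GammaZ s) fun i => (c i : ℤ))

/-- `β₀(f,s) / (X₁⋯Xₙ)`. -/
def mvBeta0Div [CommRing R] {n : ℕ} (f : MvPolynomial (Fin n) R) (s : (Fin n → ℕ) → R) :
    MvPolynomial (Fin n) R :=
  ∑ c ∈ Finset.Icc oneExp (degE f),
    MvPolynomial.monomial (c - oneExp) (polyMulG f (GammaZ s) fun i => (c i : ℤ))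

/-- `β₀(f,s) / Xᵢ`. -/
def mvBeta0DivXi [CommRing R] {n : ℕ} (i : Fin n) (f : MvPolynomial (Fin n) R)
    (s : (Fin n → ℕ) → R) : MvPolynomial (Fin n) R :=
  ∑ c ∈ Finset.Icc oneExp (degE f),
    MvPolynomial.monomial (c - Finsupp.single i 1) (polyMulG f (GammaZ s) fun i => (c i : ℤ))

/-- Generalized Newton divided difference `ν^a f = (f | [a, deg f]) / X^a`. -/
def nuA [CommRing R] {n : ℕ} (a : Fin n →₀ ℕ) (f : MvPolynomial (Fin n) R) :
    MvPolynomial (Fin n) R :=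
  ∑ b ∈ Finset.Icc a (degE f), MvPolynomial.monomial (b - a) (f.coeff b)

/-- Merge a point of `(-ℕ)^I` with a point of `(-ℕ)^{I'}` into a point of `(-ℕ)^n`. -/
def mergePt {n : ℕ} (I : Finset (Fin n)) (a : {j : Fin n // j ∈ I} → ℕ)
    (a' : {j : Fin n // j ∉ I} → ℕ) : Fin n → ℕ :=
  fun j => if h : j ∈ I then a ⟨j, h⟩ else a' ⟨j, h⟩

/-- Right-shift action with values in an `R`-module (used for sequences valued in a
power series ring). -/
def shiftM [CommSemiring R] {σ : Type*} {M : Type*} [AddCommMonoid M] [Module R M]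
    (f : MvPolynomial σ R) (s : (σ → ℕ) → M) : (σ → ℕ) → M :=
  fun b => ∑ a ∈ f.support, f.coeff a • s (fun j => b j + a j)

/-- for `n ≥ 2` and `i` a proper subset of variables,
`⋂_{a'} Ann(s^{(a')}) = Ann(s) ∩ R[X_i] = Ann(s^{(i,*)})`. -/
theorem stmt11 [CommRing R] {n : ℕ} (hn : 2 ≤ n) (I : Finset (Fin n)) (hI : I ⊂ Finset.univ)
    (s : (Fin n → ℕ) → R) (f : MvPolynomial {j : Fin n // j ∈ I} R) :
    ((∀ a' : {j : Fin n // j ∉ I} → ℕ,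
        shiftA f (fun a => s (mergePt I a a')) = 0) ↔
      shiftA (MvPolynomial.rename Subtype.val f) s = 0) ∧
    (shiftA (MvPolynomial.rename Subtype.val f) s = 0 ↔
      shiftM f
        (fun a => ((fun e => s (mergePt I a fun j => e j)) :
          MvPowerSeries {j : Fin n // j ∉ I} R)) = 0) := by
  classical
  have hinj : Function.Injective (Subtype.val : {j : Fin n // j ∈ I} → Fin n) :=
    Subtype.val_injective
  have hmap : ∀ (a : {j : Fin n // j ∈ I} →₀ ℕ) (j : Fin n),
      Finsupp.mapDomain Subtype.val a j = if h : j ∈ I then a ⟨j, h⟩ else 0 := by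
    intro a j
    by_cases h : j ∈ I
    · simp only [dif_pos h]
      have := Finsupp.mapDomain_apply hinj a ⟨j, h⟩
      simpa using this
    · simp only [dif_neg h]
      refine Finsupp.mapDomain_notin_range _ _ ?_
      rintro ⟨⟨j', hj'⟩, rfl⟩
      exact h hj'
  -- the key predicate
  have hA : ∀ b : Fin n → ℕ, shiftA (MvPolynomial.rename Subtype.val f) s b
      = ∑ a ∈ f.support, f.coeff a *
          s (fun j => b j + if h : j ∈ I then a ⟨j, h⟩ else 0) := by
    intro b
    unfold shiftA
    rw [MvPolynomial.support_rename_of_injective hinj,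
      Finset.sum_image (fun a _ b _ h => Finsupp.mapDomain_injective hinj h)]
    refine Finset.sum_congr rfl fun a _ => ?_
    rw [MvPolynomial.coeff_rename_mapDomain _ hinj]
    congr 1
    congr 1
    funext j
    rw [hmap]
  have hmerge : ∀ (b0 : {j : Fin n // j ∈ I} → ℕ) (a' : {j : Fin n // j ∉ I} → ℕ)
      (a : {j : Fin n // j ∈ I} →₀ ℕ),
      (fun j => mergePt I b0 a' j + if h : j ∈ I then a ⟨j, h⟩ else 0)
        = mergePt I (fun j => b0 j + a j) a' := by
    intro b0 a' a
    funext j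
    by_cases h : j ∈ I <;> simp [mergePt, h]
  have hsplit : ∀ b : Fin n → ℕ,
      b = mergePt I (fun j => b j) (fun j => b j) := by
    intro b
    funext j
    by_cases h : j ∈ I <;> simp [mergePt, h]
  have key1 : (∀ a' : {j : Fin n // j ∉ I} → ℕ,
      shiftA f (fun a => s (mergePt I a a')) = 0) ↔
      shiftA (MvPolynomial.rename Subtype.val f) s = 0 := by
    constructor
    · intro H
      funext b
      rw [hA b]
      have := congrFun (H (fun j => b j.1)) (fun j => b j.1)
      simp only [shiftA, Pi.zero_apply] at this ⊢
      rw [show (0 : R) = (0 : ((Fin n → ℕ) → R)) b from rfl] at this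
      calc ∑ a ∈ f.support, f.coeff a *
              s (fun j => b j + if h : j ∈ I then a ⟨j, h⟩ else 0)
          = ∑ a ∈ f.support, f.coeff a *
              s (mergePt I (fun j => b j.1 + a j) (fun j => b j.1)) := by
            refine Finset.sum_congr rfl fun a _ => ?_
            congr 1
            conv_lhs => rw [hsplit b]
            rw [show (fun j : Fin n => mergePt I (fun j => b j.1) (fun j => b j.1) j
              + if h : j ∈ I then a ⟨j, h⟩ else 0)
              = mergePt I (fun j => b j.1 + a j) (fun j => b j.1) from
              hmerge _ _ a]
        _ = 0 := this
    · intro H a'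
      funext b0
      have := congrFun H (mergePt I b0 a')
      rw [hA] at this
      simp only [Pi.zero_apply] at this ⊢
      simp only [shiftA]
      calc ∑ a ∈ f.support, f.coeff a * s (mergePt I (fun j => b0 j + a j) a')
          = ∑ a ∈ f.support, f.coeff a *
              s (fun j => mergePt I b0 a' j + if h : j ∈ I then a ⟨j, h⟩ else 0) := by
            refine Finset.sum_congr rfl fun a _ => ?_
            rw [hmerge]
        _ = 0 := this
  refine ⟨key1, ?_⟩
  rw [← key1]
  constructor
  · intro H
    funext b0
    show (∑ a ∈ f.support, f.coeff a • (fun e : {j : Fin n // j ∉ I} →₀ ℕ =>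
        s (mergePt I (fun j => b0 j + a j) fun j => e j)) : MvPowerSeries _ R) = 0
    ext e
    have := congrFun (H (fun j => e j)) b0
    simp only [shiftA, Pi.zero_apply] at this
    have hco : ∀ (φ : MvPowerSeries {j : Fin n // j ∉ I} R),
        MvPowerSeries.coeff e φ = φ e := fun _ => rfl
    calc MvPowerSeries.coeff e (∑ a ∈ f.support, f.coeff a •
          (fun e : {j : Fin n // j ∉ I} →₀ ℕ =>
            s (mergePt I (fun j => b0 j + a j) fun j => e j) : MvPowerSeries _ R))
        = ∑ a ∈ f.support, f.coeff a *
            s (mergePt I (fun j => b0 j + a j) fun j => e j) := by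
          erw [map_sum]
          refine Finset.sum_congr rfl fun a _ => ?_
          erw [MvPowerSeries.coeff_smul, hco]
      _ = 0 := this
  · intro H a'
    funext b0
    have := congrFun H b0
    simp only [shiftM, Pi.zero_apply] at this
    have := congrArg (MvPowerSeries.coeff (Finsupp.equivFunOnFinite.symm a')) this
    erw [map_sum, map_zero] at this
    simp only [shiftA, Pi.zero_apply]
    have hco : ∀ (φ : MvPowerSeries {j : Fin n // j ∉ I} R) e,
        MvPowerSeries.coeff e φ = φ e := fun _ _ => rfl
    calc ∑ a ∈ f.support, f.coeff a * s (mergePt I (fun j => b0 j + a j) a')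
        = ∑ a ∈ f.support, MvPowerSeries.coeff (Finsupp.equivFunOnFinite.symm a')
            (f.coeff a • ((fun e : {j : Fin n // j ∉ I} →₀ ℕ =>
              s (mergePt I (fun j => b0 j + a j) fun j => e j)) : MvPowerSeries _ R)) := by
          refine Finset.sum_congr rfl fun a _ => ?_
          erw [MvPowerSeries.coeff_smul, hco]
          simp
      _ = 0 := this
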